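/- Let E be a real inner product space and let C ⊆ E be a nonempty set. Then the function x ↦ (1/2)‖x‖² − (1/2)(Metric.infDist x C)² is convex on E. (This semiconvexity of the squared distance underlies the gradient formula for the squared distance to a fixed-point set.) -/

import Mathlib

lemma fire_aux {E : Type*} [NormedAddCommGroup E] [InnerProductSpace ℝ E]
    (C : Set E) (u : E) (hu : u ∈ C) (x : E) :
    inner ℝ x u - (1/2 : ℝ) * ‖u‖^2 ≤ (1/2 : ℝ) * ‖x‖^2 - (1/2 : ℝ) * (Metric.infDist x C)^2 := by
  have h1 : Metric.infDist x C ≤ dist x u := Metric.infDist_le_dist_of_mem hu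
  have h0 : 0 ≤ Metric.infDist x C := Metric.infDist_nonneg
  have h2 : (Metric.infDist x C)^2 ≤ (dist x u)^2 := by nlinarith
  have h3 : (dist x u)^2 = ‖x‖^2 - 2 * inner ℝ x u + ‖u‖^2 := by
    rw [dist_eq_norm]; exact norm_sub_sq_real x u
  linarith

theorem fire_semiconvex_sq_dist
    {E : Type*} [NormedAddCommGroup E] [InnerProductSpace ℝ E]
    (C : Set E) (hC : C.Nonempty) :
    ConvexOn ℝ Set.univ
      (fun x : E => (1 / 2 : ℝ) * ‖x‖ ^ 2 - (1 / 2 : ℝ) * (Metric.infDist x C) ^ 2) := by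
  refine ⟨convex_univ, ?_⟩
  intro x _ y _ a b ha hb hab
  set z := a • x + b • y with hz
  refine le_of_forall_pos_le_add ?_
  intro ε hε
  set d := Metric.infDist z C with hd
  have hd0 : 0 ≤ d := Metric.infDist_nonneg
  set δ : ℝ := min 1 (ε / (2 * d + 2)) with hδ
  have hδ0 : 0 < δ := by
    apply lt_min one_pos
    positivity
  obtain ⟨u, huC, hu⟩ := (Metric.infDist_lt_iff hC).mp (show d < d + δ by linarith)
  have hsq : (dist z u)^2 < d^2 + ε := by
    have hδ1 : δ ≤ 1 := min_le_left _ _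
    have hδ2 : δ ≤ ε / (2 * d + 2) := min_le_right _ _
    have : δ * (2 * d + 2) ≤ ε := by
      calc δ * (2 * d + 2) ≤ (ε / (2 * d + 2)) * (2 * d + 2) := by
            apply mul_le_mul_of_nonneg_right hδ2; positivity
        _ = ε := by field_simp
    have hdz : 0 ≤ dist z u := dist_nonneg
    nlinarith [hu]
  have hx := fire_aux C u huC x
  have hy := fire_aux C u huC y
  have hzu : (dist z u)^2 = ‖z‖^2 - 2 * inner ℝ z u + ‖u‖^2 := by
    rw [dist_eq_norm]; exact norm_sub_sq_real z u
  have hinner : (inner ℝ z u : ℝ) = a * inner ℝ x u + b * inner ℝ y u := by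
    simp [hz, inner_add_left, real_inner_smul_left]
  simp only [smul_eq_mul]
  rw [← hd]
  nlinarith [hsq, hzu, hinner, mul_le_mul_of_nonneg_left hx ha, mul_le_mul_of_nonneg_left hy hb]
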